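/- Let 𝓕 be a family of density sets (𝓕 ⊆ 𝒟) that is closed under finite intersections. Then there exists a collection Σ of ~-equivalence classes of density sets with 𝓕/~ ⊆ Σ such that: [ℕ] ∈ Σ; for all [A], [B] ∈ Σ the classes [A ∩ B], [A ∪ B] and [ℕ ∖ A] are classes of density sets and belong to Σ, and with these operations Σ is a Boolean algebra (ordered by ⪯_𝒩); every ⪯_𝒩-increasing sequence in Σ has a least upper bound in 𝒟/~ which belongs to Σ; the map d̂ : Σ → [0,1], d̂([A]) = d(A), is well defined; and d̂ is σ-additive on Σ: for every sequence ([Aₙ]) ⊆ Σ with Aₙ ∩ Aₘ ∈ 𝒩 for all n ≠ m, the least upper bound [A] ∈ Σ of the classes of the finite unions A₁ ∪ … ∪ Aₙ satisfies d(A) = ∑ₙ d(Aₙ). -/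

import Mathlib

/-- The counting sequence `n ↦ |A ∩ {1,…,n}| / n` of a set of natural numbers. -/
noncomputable def densSeq (A : Set ℕ) (n : ℕ) : ℝ :=
  (Nat.card ↥(A ∩ Set.Icc 1 n) : ℝ) / (n : ℝ)

/-- `A` has natural density `a`. -/
def HasDens (A : Set ℕ) (a : ℝ) : Prop :=
  Filter.Tendsto (densSeq A) Filter.atTop (nhds a)

/-- `A` is a density set, i.e. its natural density exists. -/
def IsDensitySet (A : Set ℕ) : Prop := ∃ a, HasDens A a

/-- `A` is a null density set. -/
def NullDens (A : Set ℕ) : Prop := HasDens A 0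

/-- The relation `A ⪯_𝒩 B`: there is a null density set `N` with `A ⊆ B ∪ N`. -/
def DensLE (A B : Set ℕ) : Prop := ∃ N, NullDens N ∧ A ⊆ B ∪ N


/-- `K ∼ M`: the symmetric difference of `K` and `M` has null density. -/
def EquivDens (K M : Set ℕ) : Prop := NullDens (symmDiff K M)

open Filter Set

lemma finInter (A : Set ℕ) (n : ℕ) : (A ∩ Set.Icc 1 n).Finite :=
  (Set.finite_Icc 1 n).inter_of_right A

lemma densSeq_eq (A : Set ℕ) (n : ℕ) : densSeq A n = ((A ∩ Set.Icc 1 n).ncard : ℝ) / n := rfl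

lemma densSeq_nonneg (A : Set ℕ) (n : ℕ) : 0 ≤ densSeq A n := by
  apply div_nonneg <;> positivity

lemma ncard_Icc' (a n : ℕ) : (Set.Icc a n).ncard = n + 1 - a := by
  rw [← Finset.coe_Icc, Set.ncard_coe_finset, Nat.card_Icc]

lemma ncard_le_n (A : Set ℕ) (n : ℕ) : (A ∩ Set.Icc 1 n).ncard ≤ n := by
  calc (A ∩ Set.Icc 1 n).ncard ≤ (Set.Icc 1 n).ncard :=
        Set.ncard_le_ncard Set.inter_subset_right (Set.finite_Icc 1 n)
    _ = n := by rw [ncard_Icc']; omega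

lemma densSeq_le_one (A : Set ℕ) (n : ℕ) : densSeq A n ≤ 1 := by
  rcases Nat.eq_zero_or_pos n with h | h
  · simp [densSeq_eq, h]
  · rw [densSeq_eq, div_le_one (by exact_mod_cast h)]
    exact_mod_cast ncard_le_n A n

lemma densSeq_mono {A B : Set ℕ} (h : A ⊆ B) (n : ℕ) : densSeq A n ≤ densSeq B n := by
  rw [densSeq_eq, densSeq_eq]
  have := Set.ncard_le_ncard (Set.inter_subset_inter_left (Set.Icc 1 n) h) (finInter B n)
  have : ((A ∩ Set.Icc 1 n).ncard:ℝ) ≤ ((B ∩ Set.Icc 1 n).ncard:ℝ) := by exact_mod_cast this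
  gcongr

lemma densSeq_univ {n : ℕ} (h : 1 ≤ n) : densSeq Set.univ n = 1 := by
  rw [densSeq_eq, Set.univ_inter, ncard_Icc']
  have : (0:ℝ) < n := by exact_mod_cast h
  field_simp
  simp

lemma densSeq_union_inter (A B : Set ℕ) (n : ℕ) :
    densSeq (A ∪ B) n + densSeq (A ∩ B) n = densSeq A n + densSeq B n := by
  simp only [densSeq_eq, ← add_div]
  congr 1
  have h1 : (A ∪ B) ∩ Set.Icc 1 n = (A ∩ Set.Icc 1 n) ∪ (B ∩ Set.Icc 1 n) := by
    ext x; simp [Set.mem_inter_iff, Set.mem_union]; tauto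
  have h2 : (A ∩ B) ∩ Set.Icc 1 n = (A ∩ Set.Icc 1 n) ∩ (B ∩ Set.Icc 1 n) := by
    ext x; simp [Set.mem_inter_iff]; tauto
  rw [h1, h2]
  exact_mod_cast congrArg (Nat.cast (R := ℝ))
    (Set.ncard_union_add_ncard_inter _ _ (finInter A n) (finInter B n))

lemma densSeq_union_le (A B : Set ℕ) (n : ℕ) :
    densSeq (A ∪ B) n ≤ densSeq A n + densSeq B n := by
  have := densSeq_union_inter A B n
  have := densSeq_nonneg (A ∩ B) n
  linarith

lemma densSeq_diff (A B : Set ℕ) (n : ℕ) :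
    densSeq (A \ B) n = densSeq A n - densSeq (A ∩ B) n := by
  have h := densSeq_union_inter (A \ B) (A ∩ B) n
  have h1 : (A \ B) ∪ (A ∩ B) = A := by ext x; simp
  have h2 : (A \ B) ∩ (A ∩ B) = (∅ : Set ℕ) := by ext x; simp; tauto
  have h3 : densSeq (∅ : Set ℕ) n = 0 := by simp [densSeq_eq]
  rw [h1, h2, h3] at h
  linarith

lemma densSeq_compl (A : Set ℕ) {n : ℕ} (h : 1 ≤ n) :
    densSeq (Set.univ \ A) n = 1 - densSeq A n := by
  rw [densSeq_diff, densSeq_univ h, Set.univ_inter]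

lemma densSeq_subset_union {A B C : Set ℕ} (h : A ⊆ B ∪ C) (n : ℕ) :
    densSeq A n ≤ densSeq B n + densSeq C n :=
  (densSeq_mono h n).trans (densSeq_union_le B C n)

lemma symmDiff_eq'' (A B : Set ℕ) : symmDiff A B = (A \ B) ∪ (B \ A) := by
  ext x; simp [Set.mem_symmDiff]

lemma densSeq_abs_sub (A B : Set ℕ) (n : ℕ) :
    |densSeq A n - densSeq B n| ≤ densSeq (symmDiff A B) n := by
  rw [abs_sub_le_iff]
  constructor
  · have h : A ⊆ B ∪ symmDiff A B := by intro x hx; by_cases hB : x ∈ B <;>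
      simp [Set.mem_symmDiff, hx, hB]
    have := densSeq_subset_union h n; linarith
  · have h : B ⊆ A ∪ symmDiff A B := by intro x hx; by_cases hA : x ∈ A <;>
      simp [Set.mem_symmDiff, hx, hA]
    have := densSeq_subset_union h n; linarith

/-! ### Limit layer -/

lemma hasDens_empty : NullDens (∅ : Set ℕ) := by
  have : densSeq (∅ : Set ℕ) = fun _ => 0 := by funext n; simp [densSeq_eq]
  unfold NullDens HasDens; rw [this]; exact tendsto_const_nhds

lemma hasDens_univ : HasDens Set.univ 1 := by
  unfold HasDens
  have : ∀ᶠ n in atTop, densSeq Set.univ n = 1 := by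
    filter_upwards [eventually_ge_atTop 1] with n hn using densSeq_univ hn
  exact Tendsto.congr' (by filter_upwards [this] with n hn using hn.symm) tendsto_const_nhds

lemma null_squeeze {A : Set ℕ} {g : ℕ → ℝ} (hg : Filter.Tendsto g atTop (nhds 0))
    (h : ∀ᶠ n in atTop, densSeq A n ≤ g n) : NullDens A := by
  have h0 : ∀ᶠ n in atTop, 0 ≤ densSeq A n := Eventually.of_forall (densSeq_nonneg A)
  exact squeeze_zero' h0 h hg

lemma null_mono {A N : Set ℕ} (h : A ⊆ N) (hN : NullDens N) : NullDens A :=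
  null_squeeze hN (Eventually.of_forall (densSeq_mono h))

lemma null_union {N M : Set ℕ} (hN : NullDens N) (hM : NullDens M) : NullDens (N ∪ M) := by
  have := (hN.add hM)
  rw [add_zero] at this
  exact null_squeeze this (Eventually.of_forall (densSeq_union_le N M))

lemma null_subset_union {A N M : Set ℕ} (h : A ⊆ N ∪ M) (hN : NullDens N) (hM : NullDens M) :
    NullDens A := null_mono h (null_union hN hM)

lemma null_bounded {A : Set ℕ} {c : ℕ} (h : ∀ m ∈ A, m ≤ c) : NullDens A := by
  apply null_squeeze (g := fun n => (c : ℝ) / n) (tendsto_const_div_atTop_nhds_zero_nat (c : ℝ))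
  apply Eventually.of_forall
  intro n
  rw [densSeq_eq]
  have hsub : A ∩ Set.Icc 1 n ⊆ Set.Icc 1 c := fun x hx => ⟨hx.2.1, h x hx.1⟩
  have hcard : (A ∩ Set.Icc 1 n).ncard ≤ c := by
    have := Set.ncard_le_ncard hsub (Set.finite_Icc 1 c)
    rwa [ncard_Icc', Nat.add_sub_cancel] at this
  have hcard' : ((A ∩ Set.Icc 1 n).ncard : ℝ) ≤ (c : ℝ) := by exact_mod_cast hcard
  gcongr

lemma densLE_iff {A B : Set ℕ} : DensLE A B ↔ NullDens (A \ B) := by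
  constructor
  · rintro ⟨N, hN, hsub⟩
    exact null_mono (fun x hx => by rcases hsub hx.1 with h | h; exact absurd h hx.2; exact h) hN
  · intro h
    exact ⟨A \ B, h, fun x hx => by by_cases hB : x ∈ B; exact Or.inl hB; exact Or.inr ⟨hx, hB⟩⟩

lemma densLE_of_subset {A B : Set ℕ} (h : A ⊆ B) : DensLE A B :=
  ⟨∅, hasDens_empty, fun x hx => Or.inl (h hx)⟩

lemma densLE_refl (A : Set ℕ) : DensLE A A := densLE_of_subset (subset_refl A)

lemma densLE_trans {A B C : Set ℕ} (h1 : DensLE A B) (h2 : DensLE B C) : DensLE A C := by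
  rw [densLE_iff] at *
  exact null_subset_union (fun x hx => by
    by_cases hB : x ∈ B
    · exact Or.inr ⟨hB, hx.2⟩
    · exact Or.inl ⟨hx.1, hB⟩) h1 h2

lemma densLE_union_lub {A B C : Set ℕ} (h1 : DensLE A C) (h2 : DensLE B C) :
    DensLE (A ∪ B) C := by
  rw [densLE_iff] at *
  exact null_subset_union (fun x hx => by
    rcases hx.1 with h | h
    · exact Or.inl ⟨h, hx.2⟩
    · exact Or.inr ⟨h, hx.2⟩) h1 h2

lemma equiv_null_diff {A B : Set ℕ} (h : EquivDens A B) :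
    NullDens (A \ B) ∧ NullDens (B \ A) := by
  have h' : NullDens ((A \ B) ∪ (B \ A)) := by
    have : NullDens (symmDiff A B) := h
    rwa [symmDiff_eq''] at this
  exact ⟨null_mono Set.subset_union_left h', null_mono Set.subset_union_right h'⟩

lemma hasDens_congr {A B : Set ℕ} (h : EquivDens A B) {a : ℝ} (hA : HasDens A a) :
    HasDens B a := by
  have key : Filter.Tendsto (fun n => densSeq B n - densSeq A n) atTop (nhds 0) := by
    apply squeeze_zero_norm (fun n => ?_) h
    simpa [abs_sub_comm] using densSeq_abs_sub A B n
  have := key.add hA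
  rw [zero_add] at this
  exact this.congr (fun n => by ring)

lemma hasDens_union {A B : Set ℕ} {a b c : ℝ} (hA : HasDens A a) (hB : HasDens B b)
    (hAB : HasDens (A ∩ B) c) : HasDens (A ∪ B) (a + b - c) := by
  have := (hA.add hB).sub hAB
  exact this.congr (fun n => by have := densSeq_union_inter A B n; ring_nf; linarith)

lemma hasDens_diff {A B : Set ℕ} {a c : ℝ} (hA : HasDens A a) (hAB : HasDens (A ∩ B) c) :
    HasDens (A \ B) (a - c) :=
  (hA.sub hAB).congr (fun n => (densSeq_diff A B n).symm)

lemma isDens_union {A B : Set ℕ} (hA : IsDensitySet A) (hB : IsDensitySet B)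
    (hAB : IsDensitySet (A ∩ B)) : IsDensitySet (A ∪ B) := by
  obtain ⟨a, ha⟩ := hA; obtain ⟨b, hb⟩ := hB; obtain ⟨c, hc⟩ := hAB
  exact ⟨_, hasDens_union ha hb hc⟩

lemma isDens_diff {A B : Set ℕ} (hA : IsDensitySet A) (hAB : IsDensitySet (A ∩ B)) :
    IsDensitySet (A \ B) := by
  obtain ⟨a, ha⟩ := hA; obtain ⟨c, hc⟩ := hAB
  exact ⟨_, hasDens_diff ha hc⟩

lemma hasDens_compl {A : Set ℕ} {a : ℝ} (hA : HasDens A a) : HasDens (Set.univ \ A) (1 - a) := by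
  have := hasDens_diff hasDens_univ (A := Set.univ) (B := A) (c := a)
    (by rw [Set.univ_inter]; exact hA)
  exact this

lemma hasDens_nonneg {A : Set ℕ} {a : ℝ} (hA : HasDens A a) : 0 ≤ a :=
  ge_of_tendsto hA (Eventually.of_forall (densSeq_nonneg A))

lemma hasDens_le_one {A : Set ℕ} {a : ℝ} (hA : HasDens A a) : a ≤ 1 :=
  le_of_tendsto hA (Eventually.of_forall (densSeq_le_one A))

/-! ### Upper-density layer -/

def UDle (X : Set ℕ) (e : ℝ) : Prop := ∀ᶠ n in atTop, densSeq X n ≤ e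

lemma UDle.mono_set {X Y : Set ℕ} (h : X ⊆ Y) {e : ℝ} (hY : UDle Y e) : UDle X e := by
  filter_upwards [hY] with n hn using (densSeq_mono h n).trans hn

lemma UDle.mono_eps {X : Set ℕ} {e e' : ℝ} (hee : e ≤ e') (hX : UDle X e) : UDle X e' := by
  filter_upwards [hX] with n hn using hn.trans hee

lemma UDle.union {X Y : Set ℕ} {e d : ℝ} (hX : UDle X e) (hY : UDle Y d) :
    UDle (X ∪ Y) (e + d) := by
  filter_upwards [hX, hY] with n h1 h2 using (densSeq_union_le X Y n).trans (by linarith)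

lemma null_UDle {X : Set ℕ} (h : NullDens X) {e : ℝ} (he : 0 < e) : UDle X e :=
  Filter.Tendsto.eventually_le_const he h

lemma null_of_UDle {X : Set ℕ} (h : ∀ e : ℝ, 0 < e → UDle X e) : NullDens X := by
  rw [NullDens, HasDens, Metric.tendsto_atTop]
  intro e he
  obtain ⟨N, hN⟩ := (h (e/2) (by linarith)).exists_forall_of_atTop
  exact ⟨N, fun n hn => by
    have h0 := densSeq_nonneg X n
    have := hN n hn
    rw [Real.dist_eq, abs_sub_lt_iff]
    constructor <;> simp <;> linarith⟩

lemma hasDens_UDle {X : Set ℕ} {a : ℝ} (h : HasDens X a) {e : ℝ} (he : a < e) : UDle X e :=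
  Filter.Tendsto.eventually_le_const he h

lemma symmDiff_triangle' (A B C : Set ℕ) : symmDiff A C ⊆ symmDiff A B ∪ symmDiff B C := by
  intro x hx
  simp only [Set.mem_union, Set.mem_symmDiff] at *
  tauto

lemma symmDiff_inter_subset (A B A' B' : Set ℕ) :
    symmDiff (A ∩ A') (B ∩ B') ⊆ symmDiff A B ∪ symmDiff A' B' := by
  intro x hx
  simp only [Set.mem_union, Set.mem_symmDiff, Set.mem_inter_iff] at *
  tauto

lemma symmDiff_union_subset (A B A' B' : Set ℕ) :
    symmDiff (A ∪ A') (B ∪ B') ⊆ symmDiff A B ∪ symmDiff A' B' := by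
  intro x hx
  simp only [Set.mem_union, Set.mem_symmDiff] at *
  tauto

lemma symmDiff_compl_eq (A B : Set ℕ) :
    symmDiff (Set.univ \ A) (Set.univ \ B) = symmDiff A B := by
  ext x
  simp only [Set.mem_symmDiff, Set.mem_diff, Set.mem_univ, true_and]
  tauto

/-- uniform approximation by convergent sequences gives convergence -/
lemma tendsto_of_approx (f : ℕ → ℝ)
    (h : ∀ e : ℝ, 0 < e → ∃ g : ℕ → ℝ, (∃ a, Filter.Tendsto g atTop (nhds a)) ∧
      ∀ᶠ n in atTop, |f n - g n| ≤ e) :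
    ∃ a, Filter.Tendsto f atTop (nhds a) := by
  apply cauchySeq_tendsto_of_complete
  rw [Metric.cauchySeq_iff]
  intro e he
  obtain ⟨g, ⟨a, hga⟩, hfg⟩ := h (e/4) (by linarith)
  have hg : ∀ᶠ n in atTop, dist (g n) a < e/4 := by
    obtain ⟨M, hM⟩ := Metric.tendsto_atTop.mp hga (e/4) (by linarith)
    filter_upwards [eventually_ge_atTop M] with n hn using hM n hn
  obtain ⟨N, hN⟩ := (hfg.and hg).exists_forall_of_atTop
  refine ⟨N, fun m hm n hn => ?_⟩
  obtain ⟨h1, h2⟩ := hN m hm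
  obtain ⟨h3, h4⟩ := hN n hn
  rw [Real.dist_eq] at *
  have : f m - f n = (f m - g m) + ((g m - a) - (g n - a)) + (g n - f n) := by ring
  rw [this]
  calc |(f m - g m) + ((g m - a) - (g n - a)) + (g n - f n)|
      ≤ |(f m - g m) + ((g m - a) - (g n - a))| + |g n - f n| := abs_add_le _ _
    _ ≤ |f m - g m| + |(g m - a) - (g n - a)| + |g n - f n| := by
        have := abs_add_le (f m - g m) ((g m - a) - (g n - a)); linarith
    _ ≤ |f m - g m| + (|g m - a| + |g n - a|) + |g n - f n| := by
        have := abs_sub (g m - a) (g n - a); linarith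
    _ < e := by
        rw [abs_sub_comm (g n) (f n)]
        linarith

/-! ### Algebra layer -/

def ListUnion (l : List (Set ℕ)) : Set ℕ := l.foldr (· ∪ ·) ∅

def IsPi (Q : Set (Set ℕ)) : Prop := ∀ A ∈ Q, ∀ B ∈ Q, A ∩ B ∈ Q

def diffsOf (P : Set (Set ℕ)) : Set (Set ℕ) :=
  {D | ∃ A ∈ P, ∃ l : List (Set ℕ), (∀ B ∈ l, B ∈ P) ∧ D = A \ ListUnion l}

def unionsOf (Q : Set (Set ℕ)) : Set (Set ℕ) :=
  {U | ∃ l : List (Set ℕ), (∀ D ∈ l, D ∈ Q) ∧ U = ListUnion l}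

lemma ListUnion_nil : ListUnion [] = (∅ : Set ℕ) := rfl
lemma ListUnion_cons (A : Set ℕ) (l : List (Set ℕ)) :
    ListUnion (A :: l) = A ∪ ListUnion l := rfl

lemma ListUnion_append (l l' : List (Set ℕ)) :
    ListUnion (l ++ l') = ListUnion l ∪ ListUnion l' := by
  induction l with
  | nil => simp [ListUnion_nil, ListUnion]
  | cons A l ih => simp [ListUnion_cons, ih, Set.union_assoc]

lemma inter_ListUnion (A : Set ℕ) (l : List (Set ℕ)) :
    A ∩ ListUnion l = ListUnion (l.map (A ∩ ·)) := by
  induction l with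
  | nil => simp [ListUnion_nil]
  | cons B l ih => simp only [List.map_cons, ListUnion_cons, ← ih]; ext x; simp; tauto

lemma mem_unionsOf_self {Q : Set (Set ℕ)} {D : Set ℕ} (h : D ∈ Q) : D ∈ unionsOf Q :=
  ⟨[D], by simp [h], by simp [ListUnion_cons, ListUnion_nil]⟩

lemma unionsOf_union {Q : Set (Set ℕ)} {U V : Set ℕ} (hU : U ∈ unionsOf Q)
    (hV : V ∈ unionsOf Q) : U ∪ V ∈ unionsOf Q := by
  obtain ⟨l, hl, rfl⟩ := hU; obtain ⟨l', hl', rfl⟩ := hV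
  refine ⟨l ++ l', ?_, (ListUnion_append l l').symm⟩
  intro D hD
  rcases List.mem_append.mp hD with h | h
  exacts [hl D h, hl' D h]

lemma unionsOf_empty {Q : Set (Set ℕ)} : (∅ : Set ℕ) ∈ unionsOf Q :=
  ⟨[], by simp, rfl⟩

lemma unionsOf_pi {Q : Set (Set ℕ)} (hQ : IsPi Q) : IsPi (unionsOf Q) := by
  rintro U ⟨l, hl, rfl⟩ V hV
  induction l with
  | nil => simpa [ListUnion_nil] using unionsOf_empty
  | cons A l ih =>
    rw [ListUnion_cons, Set.union_inter_distrib_right]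
    apply unionsOf_union ?_ (ih (fun D hD => hl D (List.mem_cons_of_mem _ hD)))
    obtain ⟨l', hl', rfl⟩ := hV
    rw [inter_ListUnion]
    refine ⟨l'.map (A ∩ ·), ?_, rfl⟩
    intro D hD
    obtain ⟨B, hB, rfl⟩ := List.mem_map.mp hD
    exact hQ A (hl A List.mem_cons_self) B (hl' B hB)

/-- main finite-union density lemma for π-systems -/
lemma unions_dens {Q : Set (Set ℕ)} (hQd : ∀ A ∈ Q, IsDensitySet A) (hQ : IsPi Q) :
    ∀ l : List (Set ℕ), (∀ A ∈ l, A ∈ Q) →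
      (∀ E ∈ Q, IsDensitySet (E ∩ ListUnion l)) ∧ IsDensitySet (ListUnion l) := by
  intro l
  induction l with
  | nil =>
    intro _
    constructor
    · intro E _; rw [ListUnion_nil, Set.inter_empty]; exact ⟨0, hasDens_empty⟩
    · rw [ListUnion_nil]; exact ⟨0, hasDens_empty⟩
  | cons A l ih =>
    intro hmem
    have hA : A ∈ Q := hmem A List.mem_cons_self
    have hl : ∀ B ∈ l, B ∈ Q := fun B hB => hmem B (List.mem_cons_of_mem _ hB)
    obtain ⟨ih1, ih2⟩ := ih hl
    constructor
    · intro E hE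
      rw [ListUnion_cons, Set.inter_union_distrib_left]
      apply isDens_union (hQd _ (hQ E hE A hA)) (ih1 E hE)
      have : (E ∩ A) ∩ (E ∩ ListUnion l) = (E ∩ A) ∩ ListUnion l := by
        ext x; simp; tauto
      rw [this]
      exact ih1 _ (hQ E hE A hA)
    · rw [ListUnion_cons]
      exact isDens_union (hQd A hA) ih2 (ih1 A hA)

lemma diffsOf_pi {P : Set (Set ℕ)} (hP : IsPi P) : IsPi (diffsOf P) := by
  rintro D ⟨A, hA, l, hl, rfl⟩ D' ⟨A', hA', l', hl', rfl⟩
  refine ⟨A ∩ A', hP A hA A' hA', l ++ l', ?_, ?_⟩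
  · intro B hB; rcases List.mem_append.mp hB with h | h; exacts [hl B h, hl' B h]
  · rw [ListUnion_append]; ext x; simp; tauto

lemma mem_diffsOf_self {P : Set (Set ℕ)} {A : Set ℕ} (h : A ∈ P) : A ∈ diffsOf P :=
  ⟨A, h, [], by simp, by simp [ListUnion_nil]⟩

lemma diffsOf_dens {P : Set (Set ℕ)} (hPd : ∀ A ∈ P, IsDensitySet A) (hP : IsPi P) :
    ∀ D ∈ diffsOf P, IsDensitySet D := by
  rintro D ⟨A, hA, l, hl, rfl⟩
  exact isDens_diff (hPd A hA) ((unions_dens hPd hP l hl).1 A hA)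

lemma compl_diffsOf {P : Set (Set ℕ)} (hU : Set.univ ∈ P) {D : Set ℕ} (hD : D ∈ diffsOf P) :
    Set.univ \ D ∈ unionsOf (diffsOf P) := by
  obtain ⟨A, hA, m, hm, rfl⟩ := hD
  have h1 : Set.univ \ A ∈ diffsOf P := by
    refine ⟨Set.univ, hU, [A], by simpa using hA, ?_⟩
    simp [ListUnion_cons, ListUnion_nil]
  have heq : Set.univ \ (A \ ListUnion m) = ListUnion ((Set.univ \ A) :: m) := by
    rw [ListUnion_cons]; ext x; simp; tauto
  rw [heq]
  exact ⟨(Set.univ \ A) :: m, by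
    intro B hB
    rcases List.mem_cons.mp hB with h | h
    · exact h ▸ h1
    · exact mem_diffsOf_self (hm B h), rfl⟩

lemma alg_compl {P : Set (Set ℕ)} (hP : IsPi P) (hU : Set.univ ∈ P) :
    ∀ l : List (Set ℕ), (∀ D ∈ l, D ∈ diffsOf P) →
      Set.univ \ ListUnion l ∈ unionsOf (diffsOf P) := by
  intro l
  induction l with
  | nil =>
    intro _
    have : Set.univ \ ListUnion [] = Set.univ := by simp [ListUnion_nil]
    rw [this]
    exact mem_unionsOf_self (mem_diffsOf_self hU)
  | cons D l ih =>
    intro hmem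
    have h1 : Set.univ \ ListUnion (D :: l) = (Set.univ \ D) ∩ (Set.univ \ ListUnion l) := by
      rw [ListUnion_cons]; ext x; simp
    rw [h1]
    exact unionsOf_pi (diffsOf_pi hP) _
      (compl_diffsOf hU (hmem D List.mem_cons_self)) _
      (ih (fun B hB => hmem B (List.mem_cons_of_mem _ hB)))

/-! ### The completion Σ -/

def Sig (Alg : Set (Set ℕ)) : Set (Set ℕ) :=
  {B | ∀ e : ℝ, 0 < e → ∃ A ∈ Alg, UDle (symmDiff A B) e}

lemma sig_superset {Alg : Set (Set ℕ)} {A : Set ℕ} (hA : A ∈ Alg) : A ∈ Sig Alg := by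
  intro e he
  refine ⟨A, hA, ?_⟩
  have : symmDiff A A = (∅ : Set ℕ) := by simp
  rw [this]
  exact null_UDle hasDens_empty he

lemma sig_dens {Alg : Set (Set ℕ)} (hd : ∀ A ∈ Alg, IsDensitySet A) :
    ∀ B ∈ Sig Alg, IsDensitySet B := by
  intro B hB
  apply tendsto_of_approx
  intro e he
  obtain ⟨A, hA, hud⟩ := hB e he
  refine ⟨densSeq A, hd A hA, ?_⟩
  filter_upwards [hud] with n hn
  calc |densSeq B n - densSeq A n| ≤ densSeq (symmDiff B A) n := densSeq_abs_sub B A n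
    _ = densSeq (symmDiff A B) n := by rw [symmDiff_comm]
    _ ≤ e := hn

lemma sig_of_approx {Alg : Set (Set ℕ)} {B : Set ℕ}
    (h : ∀ e : ℝ, 0 < e → ∃ W ∈ Sig Alg, UDle (symmDiff W B) e) : B ∈ Sig Alg := by
  intro e he
  obtain ⟨W, hW, hWB⟩ := h (e/2) (by linarith)
  obtain ⟨A, hA, hAW⟩ := hW (e/2) (by linarith)
  refine ⟨A, hA, ?_⟩
  have := (hAW.union hWB).mono_set (symmDiff_triangle' A W B)
  simpa using this

lemma sig_congr {Alg : Set (Set ℕ)} {B B' : Set ℕ} (hB : B ∈ Sig Alg)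
    (h : EquivDens B B') : B' ∈ Sig Alg := by
  apply sig_of_approx
  intro e he
  exact ⟨B, hB, null_UDle h he⟩

lemma sig_inter {Alg : Set (Set ℕ)} (hpi : IsPi Alg) {B B' : Set ℕ}
    (hB : B ∈ Sig Alg) (hB' : B' ∈ Sig Alg) : B ∩ B' ∈ Sig Alg := by
  intro e he
  obtain ⟨A, hA, h1⟩ := hB (e/2) (by linarith)
  obtain ⟨A', hA', h2⟩ := hB' (e/2) (by linarith)
  refine ⟨A ∩ A', hpi A hA A' hA', ?_⟩
  have := (h1.union h2).mono_set (symmDiff_inter_subset A B A' B')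
  simpa using this

lemma sig_union {Alg : Set (Set ℕ)}
    (hu : ∀ A ∈ Alg, ∀ B ∈ Alg, A ∪ B ∈ Alg) {B B' : Set ℕ}
    (hB : B ∈ Sig Alg) (hB' : B' ∈ Sig Alg) : B ∪ B' ∈ Sig Alg := by
  intro e he
  obtain ⟨A, hA, h1⟩ := hB (e/2) (by linarith)
  obtain ⟨A', hA', h2⟩ := hB' (e/2) (by linarith)
  refine ⟨A ∪ A', hu A hA A' hA', ?_⟩
  have := (h1.union h2).mono_set (symmDiff_union_subset A B A' B')
  simpa using this

lemma sig_compl {Alg : Set (Set ℕ)} (hc : ∀ A ∈ Alg, Set.univ \ A ∈ Alg) {B : Set ℕ}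
    (hB : B ∈ Sig Alg) : Set.univ \ B ∈ Sig Alg := by
  intro e he
  obtain ⟨A, hA, h1⟩ := hB e he
  refine ⟨Set.univ \ A, hc A hA, ?_⟩
  rwa [symmDiff_compl_eq]

/-! ### The monotone limit lemma -/

lemma limit_lemma {Alg : Set (Set ℕ)} (hd : ∀ A ∈ Alg, IsDensitySet A)
    (W : ℕ → Set ℕ) (hWS : ∀ k, W k ∈ Sig Alg) (hmono : ∀ k, W k ⊆ W (k+1))
    (d : ℕ → ℝ) (hdW : ∀ k, HasDens (W k) (d k))
    (s : ℝ) (hs : Filter.Tendsto d atTop (nhds s)) :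
    ∃ B ∈ Sig Alg, HasDens B s ∧ (∀ k, NullDens (W k \ B)) ∧
      (∀ C : Set ℕ, (∀ k, NullDens (W k \ C)) → NullDens (B \ C)) := by
  -- monotonicity facts
  have hmono' : ∀ j k, j ≤ k → W j ⊆ W k := by
    intro j k hjk
    induction k with
    | zero => have : j = 0 := Nat.le_zero.mp hjk; rw [this]
    | succ k ih =>
      rcases Nat.lt_or_ge j (k+1) with h | h
      · exact (ih (by omega)).trans (hmono k)
      · have : j = k + 1 := by omega
        rw [this]
  have hdmono : ∀ j k, j ≤ k → d j ≤ d k := by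
    intro j k hjk
    exact le_of_tendsto_of_tendsto' (hdW j) (hdW k)
      (fun n => densSeq_mono (hmono' j k hjk) n)
  have hds : ∀ k, d k ≤ s :=
    Monotone.ge_of_tendsto (fun j k h => hdmono j k h) hs
  -- cutoffs
  have hNf : ∀ k : ℕ, ∃ N, ∀ n ≥ N, |densSeq (W k) n - d k| ≤ 1/(k+1) := by
    intro k
    have h1 : (0:ℝ) < 1/(k+1) := by positivity
    obtain ⟨N, hN⟩ := Metric.tendsto_atTop.mp (hdW k) (1/(k+1)) h1
    exact ⟨N, fun n hn => le_of_lt (by simpa [Real.dist_eq] using hN n hn)⟩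
  choose Nf hNfspec using hNf
  set c : ℕ → ℕ := fun k => Nat.rec (max (Nf 0) 1)
    (fun k ck => max (Nf (k+1)) ((k+2) * ck + 1)) k with hc
  have hc0 : c 0 = max (Nf 0) 1 := rfl
  have hcsucc : ∀ k, c (k+1) = max (Nf (k+1)) ((k+2) * c k + 1) := fun k => rfl
  have hcNf : ∀ k, Nf k ≤ c k := by
    intro k
    cases k with
    | zero => rw [hc0]; exact le_max_left _ _
    | succ k => rw [hcsucc]; exact le_max_left _ _
  have hcpos : ∀ k, 1 ≤ c k := by
    intro k
    induction k with
    | zero => rw [hc0]; exact le_max_of_le_right le_rfl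
    | succ k ih => rw [hcsucc]; refine le_max_of_le_right (by nlinarith)
  have hcgrow : ∀ k, (k+2) * c k + 1 ≤ c (k+1) := fun k => by
    rw [hcsucc]; exact le_max_right _ _
  have hcstrict : ∀ k, c k < c (k+1) := by
    intro k
    have := hcgrow k
    have := hcpos k
    nlinarith
  have hcmono : ∀ j k, j ≤ k → c j ≤ c k := by
    intro j k hjk
    induction k with
    | zero => have hj0 : j = 0 := by omega
              rw [hj0]
    | succ k ih =>
      rcases Nat.lt_or_ge j (k+1) with h | h
      · exact (ih (by omega)).trans (hcstrict k).le
      · have hj : j = k + 1 := by omega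
        rw [hj]
  have hcunbdd : ∀ k, k + 1 ≤ c k := by
    intro k
    induction k with
    | zero => exact hcpos 0
    | succ k ih => have := hcstrict k; omega
  have hcspec : ∀ k n, c k ≤ n → |densSeq (W k) n - d k| ≤ 1/(k+1) :=
    fun k n hn => hNfspec k n ((hcNf k).trans hn)
  -- define B
  set B : Set ℕ := {m | ∃ k, m ∈ W k ∧ c k < m} with hB
  -- upper inclusion: for n ≤ c (k+1), counting B below n is dominated by W k
  have hUB : ∀ k n, n ≤ c (k+1) → densSeq B n ≤ densSeq (W k) n := by
    intro k n hn
    have hsub : B ∩ Set.Icc 1 n ⊆ W k ∩ Set.Icc 1 n := by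
      rintro m ⟨⟨j, hmW, hcj⟩, hI⟩
      refine ⟨?_, hI⟩
      rcases Nat.lt_or_ge j (k+1) with h | h
      · exact hmono' j k (by omega) hmW
      · exfalso
        have := hcmono (k+1) j h
        have := hI.2
        omega
    rw [densSeq_eq, densSeq_eq]
    have hcard := Set.ncard_le_ncard hsub (finInter (W k) n)
    have hcard' : ((B ∩ Set.Icc 1 n).ncard : ℝ) ≤ ((W k ∩ Set.Icc 1 n).ncard : ℝ) := by
      exact_mod_cast hcard
    gcongr
  -- lower inclusion: B dominates W k minus an initial segment
  have hLB : ∀ k n, densSeq (W k) n ≤ densSeq B n + (c k : ℝ) / n := by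
    intro k n
    have hsub : W k ⊆ B ∪ {m | m ≤ c k} := by
      intro m hm
      rcases Nat.lt_or_ge (c k) m with h | h
      · exact Or.inl ⟨k, hm, h⟩
      · exact Or.inr h
    have h1 := densSeq_subset_union hsub n
    have h2 : densSeq {m | m ≤ c k} n ≤ (c k : ℝ) / n := by
      rw [densSeq_eq]
      have hsub2 : {m | m ≤ c k} ∩ Set.Icc 1 n ⊆ Set.Icc 1 (c k) :=
        fun x hx => ⟨hx.2.1, hx.1⟩
      have hcard : ({m | m ≤ c k} ∩ Set.Icc 1 n).ncard ≤ c k := by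
        have := Set.ncard_le_ncard hsub2 (Set.finite_Icc 1 (c k))
        rwa [ncard_Icc', Nat.add_sub_cancel] at this
      have hcard' : (({m | m ≤ c k} ∩ Set.Icc 1 n).ncard : ℝ) ≤ (c k : ℝ) := by
        exact_mod_cast hcard
      gcongr
    linarith
  -- B has density s
  have hBs : HasDens B s := by
    rw [HasDens, Metric.tendsto_atTop]
    intro e he
    obtain ⟨K0, hK0⟩ := Metric.tendsto_atTop.mp hs (e/4) (by linarith)
    obtain ⟨M, hM⟩ := exists_nat_gt (4/e)
    have hMpos : (0:ℝ) < (M:ℝ) := lt_trans (by positivity) hM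
    set K := K0 + M + 1 with hK
    refine ⟨c (K+1) + 1, fun n hn => ?_⟩
    have hex : ∃ k, n ≤ c (k+1) := ⟨n, by have := hcunbdd (n+1); omega⟩
    set k := Nat.find hex with hkdef
    have hk1 : n ≤ c (k+1) := Nat.find_spec hex
    have hkK : K + 1 ≤ k := by
      by_contra h
      have hkK' : k ≤ K := by omega
      have : n ≤ c (K+1) := hk1.trans (hcmono (k+1) (K+1) (by omega))
      omega
    have hck : c k < n := by
      have := Nat.find_min hex (m := k - 1) (by omega)
      have hkk : k - 1 + 1 = k := by omega
      rw [hkk] at this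
      omega
    clear_value k
    obtain ⟨j, rfl⟩ : ∃ j, k = j + 1 := ⟨k - 1, by omega⟩
    have hMe : (1:ℝ)/M ≤ e/4 := by
      rw [div_le_iff₀ hMpos]
      rw [div_lt_iff₀ he] at hM
      nlinarith
    have hjM : (M:ℝ) ≤ (j:ℝ) + 1 := by
      have : M ≤ j + 1 := by omega
      exact_mod_cast this
    have hM1 : (1:ℝ) ≤ (M:ℝ) := by
      have : 1 ≤ M := by
        by_contra h
        have : M = 0 := by omega
        rw [this] at hMpos
        simp at hMpos
      exact_mod_cast this
    have hj1 : (1:ℝ)/((j:ℝ)+1) ≤ e/4 :=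
      le_trans (div_le_div_of_nonneg_left (by norm_num) (by linarith) hjM) hMe
    have hj2 : (1:ℝ)/((j:ℝ)+2) ≤ e/4 :=
      le_trans (div_le_div_of_nonneg_left (by norm_num) (by positivity) (by linarith)) hj1
    have hdj : |d j - s| < e/4 := by
      have := hK0 j (by omega)
      rwa [Real.dist_eq] at this
    have hdj1 : |d (j+1) - s| < e/4 := by
      have := hK0 (j+1) (by omega)
      rwa [Real.dist_eq] at this
    rw [abs_sub_lt_iff] at hdj hdj1
    have hnpos : (0:ℝ) < (n:ℝ) := by
      have h0 : 0 < n := by omega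
      exact_mod_cast h0
    have hup : densSeq B n ≤ s + e/2 := by
      have h1 := hUB (j+1) n hk1
      have h2 : |densSeq (W (j+1)) n - d (j+1)| ≤ 1/((j:ℝ)+2) := by
        have h := hcspec (j+1) n hck.le
        have hcst : ((j+1 : ℕ) : ℝ) + 1 = (j:ℝ) + 2 := by push_cast; ring
        rwa [hcst] at h
      rw [abs_sub_le_iff] at h2
      have := hds (j+1)
      linarith [h2.1, hdj1.1]
    have hlow : s - 3*e/4 ≤ densSeq B n := by
      have h1 := hLB j n
      have h2 : |densSeq (W j) n - d j| ≤ 1/((j:ℝ)+1) := by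
        have h := hcspec j n (by have := hcmono j (j+1) (by omega); omega)
        have hcst : ((j : ℕ) : ℝ) + 1 = (j:ℝ) + 1 := by push_cast; ring
        rwa [hcst] at h
      rw [abs_sub_le_iff] at h2
      have h3 : (c j : ℝ) / n ≤ 1/((j:ℝ)+2) := by
        rw [div_le_div_iff₀ hnpos (by positivity)]
        have h4 : (j+2) * c j + 1 ≤ n := le_trans (hcgrow j) (by omega)
        have h5 : ((j:ℝ)+2) * (c j : ℝ) + 1 ≤ (n:ℝ) := by exact_mod_cast h4
        nlinarith
      linarith [h2.2, hdj.2]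
    rw [Real.dist_eq, abs_sub_lt_iff]
    constructor <;> linarith
  -- W k \ B is null
  have hWB : ∀ k, NullDens (W k \ B) := by
    intro k
    apply null_bounded (c := c k)
    intro m hm
    by_contra h
    exact hm.2 ⟨k, hm.1, by omega⟩
  -- B \ W k has small upper density for large k
  have hBW : ∀ e : ℝ, 0 < e → ∃ k, UDle (B \ W k) e := by
    intro e he
    obtain ⟨k, hk⟩ := (Metric.tendsto_atTop.mp hs (e/4) (by linarith)) 
    refine ⟨k, ?_⟩
    have hdk : |d k - s| < e/4 := by
      have := hk k le_rfl; rwa [Real.dist_eq] at this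
    have h1 : ∀ᶠ n in atTop, densSeq B n ≤ s + e/4 :=
      hasDens_UDle hBs (by linarith)
    have h2 : ∀ᶠ n in atTop, d k - e/4 ≤ densSeq (W k) n :=
      (hdW k).eventually_const_le (by linarith)
    have h3 : ∀ᶠ n in atTop, densSeq (W k \ B) n ≤ e/4 :=
      null_UDle (hWB k) (by linarith)
    filter_upwards [h1, h2, h3] with n e1 e2 e3
    have key : densSeq (B \ W k) n = densSeq B n - densSeq (B ∩ W k) n := densSeq_diff B (W k) n
    have hsub : W k ⊆ (B ∩ W k) ∪ (W k \ B) := by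
      intro x hx
      by_cases hxB : x ∈ B
      · exact Or.inl ⟨hxB, hx⟩
      · exact Or.inr ⟨hx, hxB⟩
    have h4 := densSeq_subset_union hsub n
    rw [abs_sub_lt_iff] at hdk
    have := hdk.2
    linarith
  refine ⟨B, ?_, hBs, hWB, ?_⟩
  · apply sig_of_approx
    intro e he
    obtain ⟨k, hk⟩ := hBW (e/2) (by linarith)
    refine ⟨W k, hWS k, ?_⟩
    have hsd : symmDiff (W k) B ⊆ (W k \ B) ∪ (B \ W k) := by
      rw [symmDiff_eq'']
    have h1 : UDle (W k \ B) (e/2) := null_UDle (hWB k) (by linarith)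
    have := (h1.union hk).mono_set hsd
    simpa using this
  · intro C hC
    apply null_of_UDle
    intro e he
    obtain ⟨k, hk⟩ := hBW (e/2) (by linarith)
    have h2 : UDle (W k \ C) (e/2) := null_UDle (hC k) (by linarith)
    have hsub : B \ C ⊆ (B \ W k) ∪ (W k \ C) := by
      intro x hx
      by_cases hxW : x ∈ W k
      · exact Or.inr ⟨hxW, hx.2⟩
      · exact Or.inl ⟨hx.1, hxW⟩
    have := (hk.union h2).mono_set hsub
    simpa using this

/-! ### Partial unions -/

def partUnion (A : ℕ → Set ℕ) : ℕ → Set ℕ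
  | 0 => A 0
  | (n+1) => partUnion A n ∪ A (n+1)

lemma partUnion_mono (A : ℕ → Set ℕ) (n : ℕ) : partUnion A n ⊆ partUnion A (n+1) :=
  Set.subset_union_left

lemma subset_partUnion (A : ℕ → Set ℕ) {i n : ℕ} (h : i ≤ n) : A i ⊆ partUnion A n := by
  induction n with
  | zero => have : i = 0 := by omega
            rw [this]; exact subset_refl _
  | succ n ih =>
    rcases Nat.lt_or_ge i (n+1) with h' | h'
    · exact (ih (by omega)).trans Set.subset_union_left
    · have : i = n + 1 := by omega
      rw [this]; exact Set.subset_union_right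

lemma partUnion_eq_biUnion (A : ℕ → Set ℕ) (n : ℕ) :
    partUnion A n = ⋃ i ∈ Finset.range (n+1), A i := by
  induction n with
  | zero => simp [partUnion]
  | succ n ih =>
    rw [show partUnion A (n+1) = partUnion A n ∪ A (n+1) from rfl, ih]
    ext x
    simp only [Set.mem_union, Set.mem_iUnion, Finset.mem_range]
    constructor
    · rintro (⟨i, hi, hx⟩ | hx)
      · exact ⟨i, by omega, hx⟩
      · exact ⟨n+1, by omega, hx⟩
    · rintro ⟨i, hi, hx⟩
      rcases Nat.lt_or_ge i (n+1) with h | h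
      · exact Or.inl ⟨i, by omega, hx⟩
      · have : i = n + 1 := by omega
        exact Or.inr (this ▸ hx)

lemma densLE_partUnion {A : ℕ → Set ℕ} (h : ∀ n, DensLE (A n) (A (n+1))) (n : ℕ) :
    DensLE (partUnion A n) (A n) := by
  induction n with
  | zero => exact densLE_refl _
  | succ n ih =>
    exact densLE_union_lub (densLE_trans ih (h n)) (densLE_refl _)

lemma partUnion_least {A : ℕ → Set ℕ} {C : Set ℕ} (h : ∀ n, DensLE (A n) C) (n : ℕ) :
    DensLE (partUnion A n) C := by
  induction n with
  | zero => exact h 0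
  | succ n ih => exact densLE_union_lub ih (h (n+1))

/-! ### Wrappers for the lub constructions -/

lemma lub_of_monotone {Alg : Set (Set ℕ)} (hd : ∀ A ∈ Alg, IsDensitySet A)
    (hu : ∀ A ∈ Alg, ∀ B ∈ Alg, A ∪ B ∈ Alg)
    (A : ℕ → Set ℕ) (hA : ∀ n, A n ∈ Sig Alg) (hle : ∀ n, DensLE (A n) (A (n+1))) :
    ∃ B ∈ Sig Alg, (∀ n, DensLE (A n) B) ∧
      ∀ C : Set ℕ, (∀ n, DensLE (A n) C) → DensLE B C := by
  set W := partUnion A with hW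
  have hWS : ∀ n, W n ∈ Sig Alg := by
    intro n
    induction n with
    | zero => exact hA 0
    | succ n ih => exact sig_union hu ih (hA (n+1))
  have hWdens : ∀ n, IsDensitySet (W n) := fun n => sig_dens hd _ (hWS n)
  choose d hdW using hWdens
  have hdmono : Monotone d := by
    apply monotone_nat_of_le_succ
    intro n
    exact le_of_tendsto_of_tendsto' (hdW n) (hdW (n+1))
      (fun m => densSeq_mono (partUnion_mono A n) m)
  have hbdd : BddAbove (Set.range d) := by
    refine ⟨1, ?_⟩
    rintro x ⟨n, rfl⟩
    exact hasDens_le_one (hdW n)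
  have hs := tendsto_atTop_ciSup hdmono hbdd
  obtain ⟨B, hBS, _, hWB, hleast⟩ :=
    limit_lemma hd W hWS (partUnion_mono A) d hdW _ hs
  refine ⟨B, hBS, ?_, ?_⟩
  · intro n
    exact densLE_trans (densLE_of_subset (subset_partUnion A le_rfl))
      (densLE_iff.mpr (hWB n))
  · intro C hC
    exact densLE_iff.mpr (hleast C (fun k => densLE_iff.mp (partUnion_least hC k)))

lemma sigma_additive {Alg : Set (Set ℕ)} (hd : ∀ A ∈ Alg, IsDensitySet A)
    (hu : ∀ A ∈ Alg, ∀ B ∈ Alg, A ∪ B ∈ Alg)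
    (A : ℕ → Set ℕ) (a : ℕ → ℝ) (hA : ∀ n, A n ∈ Sig Alg)
    (ha : ∀ n, HasDens (A n) (a n))
    (hpair : ∀ n m, n ≠ m → NullDens (A n ∩ A m)) :
    ∃ B ∈ Sig Alg,
      (∀ n, DensLE (⋃ i ∈ Finset.range (n + 1), A i) B) ∧
      (∀ C : Set ℕ, (∀ n, DensLE (⋃ i ∈ Finset.range (n + 1), A i) C) → DensLE B C) ∧
      HasDens B (∑' n, a n) := by
  set W := partUnion A with hW
  have hWS : ∀ n, W n ∈ Sig Alg := by
    intro n
    induction n with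
    | zero => exact hA 0
    | succ n ih => exact sig_union hu ih (hA (n+1))
  have hWinter : ∀ n m, n < m → NullDens (W n ∩ A m) := by
    intro n m hnm
    induction n with
    | zero => exact hpair 0 m (by omega)
    | succ n ih =>
      have heq : W (n+1) ∩ A m = (W n ∩ A m) ∪ (A (n+1) ∩ A m) := by
        rw [show W (n+1) = W n ∪ A (n+1) from rfl]
        ext x; simp; tauto
      rw [heq]
      exact null_union (ih (by omega)) (hpair (n+1) m (by omega))
  have hWd : ∀ n, HasDens (W n) (∑ i ∈ Finset.range (n+1), a i) := by
    intro n
    induction n with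
    | zero => simpa [Finset.sum_range_one, hW, partUnion] using ha 0
    | succ n ih =>
      have h := hasDens_union ih (ha (n+1)) (c := 0) ?_
      · rw [show W (n+1) = W n ∪ A (n+1) from rfl]
        rw [Finset.sum_range_succ]
        simpa using h
      · exact hWinter n (n+1) (by omega)
  have hanonneg : ∀ n, 0 ≤ a n := fun n => hasDens_nonneg (ha n)
  have hsummable : Summable a := by
    apply summable_of_sum_range_le (c := 1) hanonneg
    intro n
    cases n with
    | zero => norm_num
    | succ n => exact hasDens_le_one (hWd n)
  have hps : Filter.Tendsto (fun n => ∑ i ∈ Finset.range (n+1), a i) atTop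
      (nhds (∑' n, a n)) := by
    have h := hsummable.hasSum.tendsto_sum_nat
    exact h.comp (tendsto_add_atTop_nat 1)
  obtain ⟨B, hBS, hBs, hWB, hleast⟩ :=
    limit_lemma hd W hWS (partUnion_mono A) _ hWd _ hps
  refine ⟨B, hBS, ?_, ?_, hBs⟩
  · intro n
    rw [← partUnion_eq_biUnion]
    exact densLE_iff.mpr (hWB n)
  · intro C hC
    apply densLE_iff.mpr
    apply hleast
    intro k
    apply densLE_iff.mp
    have := hC k
    rwa [← partUnion_eq_biUnion] at this

/-- **Theorem 1, first part.** If `𝓕` is a family of density sets closed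
under finite intersections, then there is a collection `Σ` of density sets — saturated
under `∼`, so that it represents a collection of `∼`-equivalence classes containing
`𝓕/∼` — which contains `[ℕ]`, is closed under intersections, unions and complements,
forms a Boolean algebra under the order `⪯_𝒩` (meets, joins and complements of classes
are computed by `∩`, `∪`, `ℕ ∖ ·`, and distributivity holds), in which every
`⪯_𝒩`-increasing sequence has a least upper bound in `𝒟/∼` belonging to `Σ`, on which
`d̂([A]) = d(A)` is well defined, and on which `d̂` is `σ`-additive: for every sequence of
members of `Σ` with pairwise null-density intersections, the least upper bound of the
classes of the finite unions exists in `Σ` and its density is `∑ₙ d(Aₙ)`. -/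
theorem density_sigma_algebra_extension (F : Set (Set ℕ))
    (hFdens : ∀ A ∈ F, IsDensitySet A)
    (hFinter : ∀ A ∈ F, ∀ B ∈ F, A ∩ B ∈ F) :
    ∃ S : Set (Set ℕ),
      -- `S` consists of density sets and is saturated under `∼` (a set of classes)
      (∀ A ∈ S, IsDensitySet A) ∧
      (∀ A ∈ S, ∀ B, IsDensitySet B → EquivDens A B → B ∈ S) ∧
      -- `𝓕/∼ ⊆ Σ`
      F ⊆ S ∧
      -- `[ℕ] ∈ Σ`
      Set.univ ∈ S ∧
      -- closure under the Boolean operations, whose results are density sets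
      (∀ A ∈ S, ∀ B ∈ S, IsDensitySet (A ∩ B) ∧ A ∩ B ∈ S) ∧
      (∀ A ∈ S, ∀ B ∈ S, IsDensitySet (A ∪ B) ∧ A ∪ B ∈ S) ∧
      (∀ A ∈ S, IsDensitySet (Set.univ \ A) ∧ Set.univ \ A ∈ S) ∧
      -- with these operations `Σ` is a Boolean algebra ordered by `⪯_𝒩`:
      -- `∩` is the infimum and `∪` the supremum of classes,
      (∀ A ∈ S, ∀ B ∈ S, DensLE (A ∩ B) A ∧ DensLE (A ∩ B) B ∧
        ∀ C ∈ S, DensLE C A → DensLE C B → DensLE C (A ∩ B)) ∧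
      (∀ A ∈ S, ∀ B ∈ S, DensLE A (A ∪ B) ∧ DensLE B (A ∪ B) ∧
        ∀ C ∈ S, DensLE A C → DensLE B C → DensLE (A ∪ B) C) ∧
      -- `ℕ ∖ A` is a complement of `A` modulo `𝒩`,
      (∀ A ∈ S, NullDens (A ∩ (Set.univ \ A)) ∧ DensLE Set.univ (A ∪ (Set.univ \ A))) ∧
      -- and the lattice operations distribute,
      (∀ A ∈ S, ∀ B ∈ S, ∀ C ∈ S, A ∩ (B ∪ C) = (A ∩ B) ∪ (A ∩ C)) ∧
      -- every `⪯_𝒩`-increasing sequence in `Σ` has a least upper bound in `𝒟/∼`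
      -- which belongs to `Σ`
      (∀ A : ℕ → Set ℕ, (∀ n, A n ∈ S) → (∀ n, DensLE (A n) (A (n + 1))) →
        ∃ B ∈ S, (∀ n, DensLE (A n) B) ∧
          ∀ C : Set ℕ, IsDensitySet C → (∀ n, DensLE (A n) C) → DensLE B C) ∧
      -- `d̂ : Σ → [0,1]`, `d̂([A]) = d(A)`, is well defined
      (∀ A ∈ S, ∀ B ∈ S, EquivDens A B →
        ∀ a b : ℝ, HasDens A a → HasDens B b → a = b) ∧
      (∀ A ∈ S, ∀ a : ℝ, HasDens A a → 0 ≤ a ∧ a ≤ 1) ∧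
      -- `d̂` is `σ`-additive on `Σ`
      (∀ A : ℕ → Set ℕ, ∀ a : ℕ → ℝ,
        (∀ n, A n ∈ S) → (∀ n, HasDens (A n) (a n)) →
        (∀ n m, n ≠ m → NullDens (A n ∩ A m)) →
        ∃ B ∈ S,
          (∀ n, DensLE (⋃ i ∈ Finset.range (n + 1), A i) B) ∧
          (∀ C : Set ℕ, IsDensitySet C →
            (∀ n, DensLE (⋃ i ∈ Finset.range (n + 1), A i) C) → DensLE B C) ∧
          HasDens B (∑' n, a n)) := by
  classical
  set P : Set (Set ℕ) := insert Set.univ F with hP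
  have hPd : ∀ A ∈ P, IsDensitySet A := by
    rintro A (rfl | hA)
    · exact ⟨1, hasDens_univ⟩
    · exact hFdens A hA
  have hPpi : IsPi P := by
    rintro A (rfl | hA) B (rfl | hB)
    · rw [Set.univ_inter]; exact Set.mem_insert _ _
    · rw [Set.univ_inter]; exact Set.mem_insert_of_mem _ hB
    · rw [Set.inter_univ]; exact Set.mem_insert_of_mem _ hA
    · exact Set.mem_insert_of_mem _ (hFinter A hA B hB)
  have hunivP : Set.univ ∈ P := Set.mem_insert _ _
  set Alg : Set (Set ℕ) := unionsOf (diffsOf P) with hAlg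
  have hAd : ∀ A ∈ Alg, IsDensitySet A := by
    rintro A ⟨l, hl, rfl⟩
    exact (unions_dens (diffsOf_dens hPd hPpi) (diffsOf_pi hPpi) l hl).2
  have hApi : IsPi Alg := unionsOf_pi (diffsOf_pi hPpi)
  have hAu : ∀ A ∈ Alg, ∀ B ∈ Alg, A ∪ B ∈ Alg := fun A hA B hB => unionsOf_union hA hB
  have hAc : ∀ A ∈ Alg, Set.univ \ A ∈ Alg := by
    rintro A ⟨l, hl, rfl⟩
    exact alg_compl hPpi hunivP l hl
  have hFA : F ⊆ Alg := fun A hA =>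
    mem_unionsOf_self (mem_diffsOf_self (Set.mem_insert_of_mem _ hA))
  have hUA : Set.univ ∈ Alg := mem_unionsOf_self (mem_diffsOf_self hunivP)
  refine ⟨Sig Alg, sig_dens hAd, ?_, ?_, sig_superset hUA, ?_, ?_, ?_, ?_, ?_, ?_, ?_, ?_,
    ?_, ?_, ?_⟩
  · -- saturation
    intro A hA B _ hAB
    exact sig_congr hA hAB
  · -- F ⊆ S
    exact fun A hA => sig_superset (hFA hA)
  · -- intersections
    intro A hA B hB
    have h := sig_inter hApi hA hB
    exact ⟨sig_dens hAd _ h, h⟩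
  · -- unions
    intro A hA B hB
    have h := sig_union hAu hA hB
    exact ⟨sig_dens hAd _ h, h⟩
  · -- complements
    intro A hA
    have h := sig_compl hAc hA
    exact ⟨sig_dens hAd _ h, h⟩
  · -- infimum
    intro A _ B _
    refine ⟨densLE_of_subset Set.inter_subset_left,
      densLE_of_subset Set.inter_subset_right, ?_⟩
    intro C _ h1 h2
    obtain ⟨N, hN, hNs⟩ := h1
    obtain ⟨M, hM, hMs⟩ := h2
    refine ⟨N ∪ M, null_union hN hM, ?_⟩
    intro x hx
    rcases hNs hx with hA | hN'
    · rcases hMs hx with hB | hM'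
      · exact Or.inl ⟨hA, hB⟩
      · exact Or.inr (Or.inr hM')
    · exact Or.inr (Or.inl hN')
  · -- supremum
    intro A _ B _
    refine ⟨densLE_of_subset Set.subset_union_left,
      densLE_of_subset Set.subset_union_right, ?_⟩
    intro C _ h1 h2
    exact densLE_union_lub h1 h2
  · -- complement laws
    intro A _
    constructor
    · have : A ∩ (Set.univ \ A) = (∅ : Set ℕ) := by ext x; simp
      rw [this]; exact hasDens_empty
    · have : A ∪ (Set.univ \ A) = Set.univ := by ext x; simp [em]
      rw [this]; exact densLE_refl _
  · -- distributivity
    intro A _ B _ C _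
    exact Set.inter_union_distrib_left A B C
  · -- increasing sequences have lubs
    intro A hA hle
    obtain ⟨B, hBS, hub, hlub⟩ := lub_of_monotone hAd hAu A hA hle
    exact ⟨B, hBS, hub, fun C _ hC => hlub C hC⟩
  · -- well-definedness
    intro A _ B _ hAB a b ha hb
    exact tendsto_nhds_unique (hasDens_congr hAB ha) hb
  · -- values in [0,1]
    intro A _ a ha
    exact ⟨hasDens_nonneg ha, hasDens_le_one ha⟩
  · -- σ-additivity
    intro A a hA ha hpair
    obtain ⟨B, hBS, hub, hlub, hBd⟩ := sigma_additive hAd hAu A a hA ha hpair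
    exact ⟨B, hBS, hub, fun C _ hC => hlub C hC, hBd⟩
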